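/- (Conditional Mrs. Gerber's Lemma application) Let U → X → Y1 → Y2 be a Markov chain where X, Y1, Y2 are {0,1}-valued, Y2 = Y1 ⊕ Ψ̃ with Ψ̃ ~ Bern(p̃) independent of (U, Y1), and p̃ ∈ [0,1/2]. Then H(Y2|U) ≥ h_b( h_b^{-1}(H(Y1|U)) ∗ p̃ ), where h_b^{-1} : [0, log 2] → [0, 1/2] is the inverse of binary entropy restricted to [0,1/2]. -/

import Mathlib

open Finset

/-- Binary entropy function (natural logarithm). -/
noncomputable def binEnt (q : ℝ) : ℝ := -q * Real.log q - (1 - q) * Real.log (1 - q)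

/-- Binary convolution `a ∗ b = a(1-b) + b(1-a)`. -/
def bconv (a b : ℝ) : ℝ := a * (1 - b) + b * (1 - a)

/-- Inverse of the binary entropy function restricted to `[0, 1/2]`:
for `v ∈ [0, log 2]` this is the unique `x ∈ [0,1/2]` with `binEnt x = v`. -/
noncomputable def binEntInv (v : ℝ) : ℝ :=
  sSup {x : ℝ | 0 ≤ x ∧ x ≤ 1 / 2 ∧ binEnt x ≤ v}

/-- Conditional entropy `H(Z|U)` of a joint distribution `p` of `(U,Z)`. -/
noncomputable def condEnt {U Z : Type*} [Fintype U] [Fintype Z] (p : U → Z → ℝ) : ℝ :=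
  -∑ u, ∑ z, p u z * Real.log (p u z / ∑ z', p u z')


-- A(t) = log(1+t) - log(1-t) ≥ 2t on [0,1)
lemma mgl_A_ge {t : ℝ} (h0 : 0 ≤ t) (h1 : t < 1) :
    2*t ≤ Real.log (1+t) - Real.log (1-t) := by
  have key : MonotoneOn (fun t : ℝ => Real.log (1+t) - Real.log (1-t) - 2*t)
      (Set.Ico (0:ℝ) 1) := by
    have hd : ∀ x ∈ Set.Ioo (0:ℝ) 1, HasDerivAt
        (fun t : ℝ => Real.log (1+t) - Real.log (1-t) - 2*t)
        (1/(1+x) - (-1)/(1-x) - 2) x := by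
      intro x hx
      have h1' : HasDerivAt (fun t : ℝ => 1 + t) 1 x := by
        simpa using (hasDerivAt_id x).const_add (1:ℝ)
      have h2' : HasDerivAt (fun t : ℝ => 1 - t) (-1) x := by
        simpa using (hasDerivAt_id x).const_sub (1:ℝ)
      have hl1 := h1'.log (by nlinarith [hx.1] : (1:ℝ) + x ≠ 0)
      have hl2 := h2'.log (by nlinarith [hx.2] : (1:ℝ) - x ≠ 0)
      have h3 : HasDerivAt (fun t : ℝ => 2*t) 2 x := by
        simpa using (hasDerivAt_id x).const_mul (2:ℝ)
      exact (hl1.sub hl2).sub h3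
    apply monotoneOn_of_deriv_nonneg (convex_Ico 0 1)
    · apply ContinuousOn.sub
      apply ContinuousOn.sub
      · apply ContinuousOn.log (by fun_prop)
        intro x hx; nlinarith [hx.1]
      · apply ContinuousOn.log (by fun_prop)
        intro x hx; nlinarith [hx.2]
      · fun_prop
    · rw [interior_Ico]
      exact fun x hx => ((hd x hx).differentiableAt).differentiableWithinAt
    · rw [interior_Ico]
      intro x hx
      rw [(hd x hx).deriv]
      have a1 : (0:ℝ) < 1 + x := by nlinarith [hx.1]
      have a2 : (0:ℝ) < 1 - x := by nlinarith [hx.2]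
      rw [div_sub_div _ _ (ne_of_gt a1) (ne_of_gt a2), sub_nonneg,
        le_div_iff₀ (by positivity)]
      nlinarith [sq_nonneg x]
  have := key (Set.mem_Ico.2 ⟨le_refl 0, by norm_num⟩) (Set.mem_Ico.2 ⟨h0, h1⟩) h0
  simp at this
  linarith
-- G(t) = (1/t - t)(log(1+t)-log(1-t)) is antitone on (0,1)
lemma mgl_G_anti : AntitoneOn
    (fun t : ℝ => (t⁻¹ - t) * (Real.log (1+t) - Real.log (1-t))) (Set.Ioo 0 1) := by
  have hd : ∀ x ∈ Set.Ioo (0:ℝ) 1, HasDerivAt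
      (fun t : ℝ => (t⁻¹ - t) * (Real.log (1+t) - Real.log (1-t)))
      ((-(x^2)⁻¹ - 1) * (Real.log (1+x) - Real.log (1-x))
        + (x⁻¹ - x) * (1/(1+x) - (-1)/(1-x))) x := by
    intro x hx
    have h1' : HasDerivAt (fun t : ℝ => 1 + t) 1 x := by
      simpa using (hasDerivAt_id x).const_add (1:ℝ)
    have h2' : HasDerivAt (fun t : ℝ => 1 - t) (-1) x := by
      simpa using (hasDerivAt_id x).const_sub (1:ℝ)
    have hl1 := h1'.log (by nlinarith [hx.1] : (1:ℝ) + x ≠ 0)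
    have hl2 := h2'.log (by nlinarith [hx.2] : (1:ℝ) - x ≠ 0)
    have hinv : HasDerivAt (fun t : ℝ => t⁻¹ - t) (-(x^2)⁻¹ - 1) x :=
      (hasDerivAt_inv (ne_of_gt hx.1)).sub (hasDerivAt_id x)
    exact hinv.mul (hl1.sub hl2)
  apply antitoneOn_of_deriv_nonpos (convex_Ioo 0 1)
  · exact fun x hx => ((hd x hx).differentiableAt).continuousAt.continuousWithinAt
  · rw [interior_Ioo]
    exact fun x hx => ((hd x hx).differentiableAt).differentiableWithinAt
  · rw [interior_Ioo]
    intro x hx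
    rw [(hd x hx).deriv]
    have a0 : (0:ℝ) < x := hx.1
    have a1 : (0:ℝ) < 1 + x := by nlinarith [hx.1]
    have a2 : (0:ℝ) < 1 - x := by nlinarith [hx.2]
    have hA := mgl_A_ge (le_of_lt hx.1) hx.2
    set a := Real.log (1+x) - Real.log (1-x) with ha
    have key : (-(x^2)⁻¹ - 1) * a + (x⁻¹ - x) * (1/(1+x) - (-1)/(1-x))
        = (2*x - (1+x^2)*a) / x^2 := by
      field_simp
      ring
    rw [key]
    apply div_nonpos_of_nonpos_of_nonneg _ (sq_nonneg x)
    nlinarith [sq_nonneg x]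

-- core: σ Φ(s) ≤ Φ(σ s)
lemma mgl_core {σ s : ℝ} (hσ0 : 0 < σ) (hσ1 : σ ≤ 1) (hs0 : 0 < s) (hs1 : s < 1) :
    σ * ((1-s^2) * (Real.log (1+s) - Real.log (1-s)))
      ≤ (1-(σ*s)^2) * (Real.log (1+σ*s) - Real.log (1-σ*s)) := by
  have h1 : σ*s ≤ s := by nlinarith
  have h2 : 0 < σ*s := by positivity
  have hG := mgl_G_anti (Set.mem_Ioo.2 ⟨h2, lt_of_le_of_lt h1 hs1⟩)
    (Set.mem_Ioo.2 ⟨hs0, hs1⟩) h1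
  simp only at hG
  have e1 : (1-s^2) * (Real.log (1+s) - Real.log (1-s))
      = s * ((s⁻¹ - s) * (Real.log (1+s) - Real.log (1-s))) := by
    field_simp
  have e2 : (1-(σ*s)^2) * (Real.log (1+σ*s) - Real.log (1-σ*s))
      = (σ*s) * (((σ*s)⁻¹ - σ*s) * (Real.log (1+σ*s) - Real.log (1-σ*s))) := by
    field_simp
  rw [e1, e2]
  calc σ * (s * ((s⁻¹ - s) * (Real.log (1+s) - Real.log (1-s))))
      = (σ*s) * ((s⁻¹ - s) * (Real.log (1+s) - Real.log (1-s))) := by ring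
    _ ≤ (σ*s) * (((σ*s)⁻¹ - σ*s) * (Real.log (1+σ*s) - Real.log (1-σ*s))) :=
        mul_le_mul_of_nonneg_left hG (le_of_lt h2)
noncomputable def mglL (x : ℝ) : ℝ := Real.log (1-x) - Real.log x

lemma mglL_pos {x : ℝ} (h0 : 0 < x) (h1 : x < 1/2) : 0 < mglL x :=
  sub_pos.2 (Real.log_lt_log h0 (by linarith))

lemma mgl_hasDerivAt_L {x : ℝ} (h0 : 0 < x) (h1 : x < 1) :
    HasDerivAt mglL ((-1)/(1-x) - x⁻¹) x := by
  have h2' : HasDerivAt (fun t : ℝ => 1 - t) (-1) x := by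
    simpa using (hasDerivAt_id x).const_sub (1:ℝ)
  have hl2 := h2'.log (by linarith : (1:ℝ) - x ≠ 0)
  exact hl2.sub (Real.hasDerivAt_log (ne_of_gt h0))

-- the star inequality
lemma mgl_star {x p : ℝ} (hx : x ∈ Set.Ioo (0:ℝ) (1/2)) (hp : p ∈ Set.Ioo (0:ℝ) (1/2)) :
    (1-2*p) * (x*(1-x)) * mglL x ≤ ((1-2*p)*x+p) * (1-((1-2*p)*x+p)) * mglL ((1-2*p)*x+p) := by
  obtain ⟨hx0, hx1⟩ := hx
  obtain ⟨hp0, hp1⟩ := hp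
  have h := mgl_core (σ := 1-2*p) (s := 1-2*x) (by linarith) (by linarith)
    (by linarith) (by linarith)
  have hy0 : 0 < (1-2*p)*x+p := by nlinarith
  have hy1 : (1-2*p)*x+p < 1/2 := by nlinarith
  have e1 : Real.log (1+(1-2*x)) = Real.log (1-x) + Real.log 2 := by
    rw [show (1:ℝ)+(1-2*x) = (1-x)*2 by ring, Real.log_mul (by linarith) two_ne_zero]
  have e2 : Real.log (1-(1-2*x)) = Real.log x + Real.log 2 := by
    rw [show (1:ℝ)-(1-2*x) = x*2 by ring, Real.log_mul (ne_of_gt hx0) two_ne_zero]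
  have e3 : Real.log (1+(1-2*p)*(1-2*x)) = Real.log (1-((1-2*p)*x+p)) + Real.log 2 := by
    rw [show (1:ℝ)+(1-2*p)*(1-2*x) = (1-((1-2*p)*x+p))*2 by ring,
      Real.log_mul (by linarith) two_ne_zero]
  have e4 : Real.log (1-(1-2*p)*(1-2*x)) = Real.log ((1-2*p)*x+p) + Real.log 2 := by
    rw [show (1:ℝ)-(1-2*p)*(1-2*x) = ((1-2*p)*x+p)*2 by ring,
      Real.log_mul (ne_of_gt hy0) two_ne_zero]
  rw [e1, e2, e3, e4] at h
  simp only [mglL]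
  nlinarith [h]
noncomputable def mglPsi (p x : ℝ) : ℝ := mglL ((1-2*p)*x+p) / mglL x

lemma mgl_psi_mono {p : ℝ} (hp : p ∈ Set.Ioo (0:ℝ) (1/2)) :
    MonotoneOn (mglPsi p) (Set.Ioo (0:ℝ) (1/2)) := by
  obtain ⟨hp0, hp1⟩ := hp
  have hβ : ∀ x : ℝ, HasDerivAt (fun t : ℝ => (1-2*p)*t+p) (1-2*p) x := by
    intro x
    simpa using ((hasDerivAt_id x).const_mul (1-2*p)).add_const p
  have hmem : ∀ x ∈ Set.Ioo (0:ℝ) (1/2),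
      0 < (1-2*p)*x+p ∧ (1-2*p)*x+p < 1/2 := by
    intro x hx
    constructor <;> nlinarith [hx.1, hx.2]
  have hd : ∀ x ∈ Set.Ioo (0:ℝ) (1/2), HasDerivAt (mglPsi p)
      (((((-1)/(1-((1-2*p)*x+p)) - ((1-2*p)*x+p)⁻¹) * (1-2*p)) * mglL x
        - mglL ((1-2*p)*x+p) * ((-1)/(1-x) - x⁻¹)) / (mglL x)^2) x := by
    intro x hx
    obtain ⟨hy0, hy1⟩ := hmem x hx
    have hLy : HasDerivAt (fun t : ℝ => mglL ((1-2*p)*t+p))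
        (((-1)/(1-((1-2*p)*x+p)) - ((1-2*p)*x+p)⁻¹) * (1-2*p)) x :=
      by have h := (mgl_hasDerivAt_L hy0 (by linarith)).comp x (hβ x); exact h
    have hLx := mgl_hasDerivAt_L hx.1 (by linarith [hx.2])
    exact hLy.div hLx (ne_of_gt (mglL_pos hx.1 hx.2))
  apply monotoneOn_of_deriv_nonneg (convex_Ioo 0 (1/2))
  · exact fun x hx => ((hd x hx).differentiableAt).continuousAt.continuousWithinAt
  · rw [interior_Ioo]
    exact fun x hx => ((hd x hx).differentiableAt).differentiableWithinAt
  · rw [interior_Ioo]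
    intro x hx
    rw [(hd x hx).deriv]
    obtain ⟨hy0, hy1⟩ := hmem x hx
    have hx0 := hx.1
    have hx1 := hx.2
    apply div_nonneg _ (sq_nonneg _)
    have key := mgl_star (Set.mem_Ioo.2 ⟨hx0, hx1⟩) (Set.mem_Ioo.2 ⟨hp0, hp1⟩)
    have eN : (((-1)/(1-((1-2*p)*x+p)) - ((1-2*p)*x+p)⁻¹) * (1-2*p)) * mglL x
        - mglL ((1-2*p)*x+p) * ((-1)/(1-x) - x⁻¹)
        = ((((1-2*p)*x+p)*(1-((1-2*p)*x+p))) * mglL ((1-2*p)*x+p)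
            - (1-2*p) * (x*(1-x)) * mglL x)
          / ((x*(1-x)) * (((1-2*p)*x+p)*(1-((1-2*p)*x+p)))) := by
      have n1 : (1:ℝ)-((1-2*p)*x+p) ≠ 0 := by nlinarith
      have n2 : (1:ℝ)-x ≠ 0 := by nlinarith
      have n3 : ((1-2*p)*x+p : ℝ) ≠ 0 := ne_of_gt hy0
      have n4 : (x:ℝ) ≠ 0 := ne_of_gt hx0
      field_simp
      ring
    rw [eN]
    have q1 : (0:ℝ) < x*(1-x) := by nlinarith
    have q2 : (0:ℝ) < ((1-2*p)*x+p)*(1-((1-2*p)*x+p)) := by nlinarith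
    apply div_nonneg (by linarith) (by positivity)
lemma binEnt_eq : binEnt = Real.binEntropy := by
  funext q
  rw [binEnt, Real.binEntropy, Real.log_inv, Real.log_inv]
  ring

lemma bconv_eq (a b : ℝ) : bconv a b = (1-2*b)*a + b := by rw [bconv]; ring

lemma mgl_pointwise_main {p x₀ : ℝ} (hp : p ∈ Set.Ioo (0:ℝ) (1/2))
    (hx₀ : x₀ ∈ Set.Ioo (0:ℝ) (1/2)) :
    ∃ c : ℝ, ∀ x ∈ Set.Icc (0:ℝ) (1/2),
      Real.binEntropy ((1-2*p)*x₀+p) + c * (Real.binEntropy x - Real.binEntropy x₀)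
        ≤ Real.binEntropy ((1-2*p)*x+p) := by
  obtain ⟨hp0, hp1⟩ := hp
  obtain ⟨hx₀0, hx₀1⟩ := hx₀
  set c : ℝ := (1-2*p) * mglPsi p x₀ with hc
  refine ⟨c, ?_⟩
  have hβ : ∀ x : ℝ, HasDerivAt (fun t : ℝ => (1-2*p)*t+p) (1-2*p) x := by
    intro x
    simpa using ((hasDerivAt_id x).const_mul (1-2*p)).add_const p
  have hmem : ∀ x : ℝ, 0 ≤ x → x < 1/2 → 0 < (1-2*p)*x+p ∧ (1-2*p)*x+p < 1/2 := by
    intro x h1 h2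
    constructor <;> nlinarith
  have hder : ∀ x ∈ Set.Ioo (0:ℝ) (1/2),
      HasDerivAt (fun t : ℝ => Real.binEntropy ((1-2*p)*t+p) - c * Real.binEntropy t)
        (mglL ((1-2*p)*x+p) * (1-2*p) - c * mglL x) x := by
    intro x hx
    obtain ⟨hy0, hy1⟩ := hmem x hx.1.le hx.2
    have h1 : HasDerivAt (fun t : ℝ => Real.binEntropy ((1-2*p)*t+p))
        ((Real.log (1-((1-2*p)*x+p)) - Real.log ((1-2*p)*x+p)) * (1-2*p)) x :=
      by have h := (Real.hasDerivAt_binEntropy (ne_of_gt hy0) (by linarith)).comp x (hβ x); exact h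
    have h2 : HasDerivAt (fun t : ℝ => c * Real.binEntropy t)
        (c * (Real.log (1-x) - Real.log x)) x :=
      (Real.hasDerivAt_binEntropy (ne_of_gt hx.1) (by linarith [hx.2])).const_mul c
    have := h1.sub h2
    exact this
  have hcont : Continuous (fun t : ℝ => Real.binEntropy ((1-2*p)*t+p) - c * Real.binEntropy t) := by
    apply Continuous.sub
    · exact Real.binEntropy_continuous.comp (by continuity)
    · exact continuous_const.mul Real.binEntropy_continuous
  have hanti : AntitoneOn (fun t : ℝ => Real.binEntropy ((1-2*p)*t+p) - c * Real.binEntropy t)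
      (Set.Icc 0 x₀) := by
    apply antitoneOn_of_deriv_nonpos (convex_Icc 0 x₀) hcont.continuousOn
    · rw [interior_Icc]
      intro x hx
      have hx' : x ∈ Set.Ioo (0:ℝ) (1/2) := ⟨hx.1, lt_trans hx.2 hx₀1⟩
      exact ((hder x hx').differentiableAt).differentiableWithinAt
    · rw [interior_Icc]
      intro x hx
      have hx' : x ∈ Set.Ioo (0:ℝ) (1/2) := ⟨hx.1, lt_trans hx.2 hx₀1⟩
      rw [(hder x hx').deriv]
      have hψ : mglPsi p x ≤ mglPsi p x₀ :=
        mgl_psi_mono ⟨hp0, hp1⟩ hx' ⟨hx₀0, hx₀1⟩ hx.2.le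
      have hLx : 0 < mglL x := mglL_pos hx'.1 hx'.2
      have hLy : mglL ((1-2*p)*x+p) = mglPsi p x * mglL x := by
        rw [mglPsi, div_mul_cancel₀ _ (ne_of_gt hLx)]
      rw [hLy, hc]
      have := mul_le_mul_of_nonneg_left (mul_le_mul_of_nonneg_right hψ hLx.le)
        (by linarith : (0:ℝ) ≤ 1-2*p)
      linarith
  have hmono : MonotoneOn (fun t : ℝ => Real.binEntropy ((1-2*p)*t+p) - c * Real.binEntropy t)
      (Set.Icc x₀ (1/2)) := by
    apply monotoneOn_of_deriv_nonneg (convex_Icc x₀ (1/2)) hcont.continuousOn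
    · rw [interior_Icc]
      intro x hx
      have hx' : x ∈ Set.Ioo (0:ℝ) (1/2) := ⟨lt_trans hx₀0 hx.1, hx.2⟩
      exact ((hder x hx').differentiableAt).differentiableWithinAt
    · rw [interior_Icc]
      intro x hx
      have hx' : x ∈ Set.Ioo (0:ℝ) (1/2) := ⟨lt_trans hx₀0 hx.1, hx.2⟩
      rw [(hder x hx').deriv]
      have hψ : mglPsi p x₀ ≤ mglPsi p x :=
        mgl_psi_mono ⟨hp0, hp1⟩ ⟨hx₀0, hx₀1⟩ hx' hx.1.le
      have hLx : 0 < mglL x := mglL_pos hx'.1 hx'.2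
      have hLy : mglL ((1-2*p)*x+p) = mglPsi p x * mglL x := by
        rw [mglPsi, div_mul_cancel₀ _ (ne_of_gt hLx)]
      rw [hLy, hc]
      have := mul_le_mul_of_nonneg_left (mul_le_mul_of_nonneg_right hψ hLx.le)
        (by linarith : (0:ℝ) ≤ 1-2*p)
      linarith
  intro x hx
  have key : Real.binEntropy ((1-2*p)*x₀+p) - c * Real.binEntropy x₀
      ≤ Real.binEntropy ((1-2*p)*x+p) - c * Real.binEntropy x := by
    rcases le_total x x₀ with h | h
    · have := hanti ⟨hx.1, h⟩ ⟨le_of_lt hx₀0, le_refl x₀⟩ h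
      simpa using this
    · have := hmono ⟨le_refl x₀, le_of_lt hx₀1⟩ ⟨h, hx.2⟩ h
      simpa using this
  linarith

lemma mgl_pointwise {p x₀ : ℝ} (hp : p ∈ Set.Icc (0:ℝ) (1/2)) (hx₀ : x₀ ∈ Set.Icc (0:ℝ) (1/2)) :
    ∃ c : ℝ, ∀ x ∈ Set.Icc (0:ℝ) (1/2),
      binEnt (bconv x₀ p) + c * (binEnt x - binEnt x₀) ≤ binEnt (bconv x p) := by
  have h12 : ((1:ℝ)/2) = 2⁻¹ := by norm_num
  have hmono : MonotoneOn Real.binEntropy (Set.Icc (0:ℝ) (1/2)) := by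
    rw [h12]
    exact Real.binEntropy_strictMonoOn.monotoneOn
  rw [binEnt_eq]
  rcases eq_or_lt_of_le hp.2 with hp2 | hp2
  · -- p = 1/2
    subst hp2
    refine ⟨0, fun x hx => ?_⟩
    have e : ∀ z : ℝ, bconv z (1/2) = 1/2 := by
      intro z; rw [bconv]; ring
    rw [e, e]
    simp
  · rcases eq_or_lt_of_le hx₀.2 with hx2 | hx2
    · -- x₀ = 1/2
      subst hx2
      refine ⟨1, fun x hx => ?_⟩
      have e : bconv (1/2 : ℝ) p = 1/2 := by rw [bconv]; ring
      rw [e]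
      have h1 : x ≤ bconv x p := by rw [bconv]; nlinarith [hp.1, hx.2]
      have h2 : bconv x p ≤ 1/2 := by rw [bconv]; nlinarith [hx.2, hp.2]
      have h3 : (0:ℝ) ≤ bconv x p := by rw [bconv]; nlinarith [hp.1, hx.1, hx.2, hp.2]
      have := hmono hx ⟨h3, h2⟩ h1
      linarith
    · rcases eq_or_lt_of_le hp.1 with hp0 | hp0
      · -- p = 0
        rw [← hp0]
        refine ⟨1, fun x hx => ?_⟩
        have e : ∀ z : ℝ, bconv z 0 = z := by
          intro z; rw [bconv]; ring
        rw [e, e]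
        linarith
      · rcases eq_or_lt_of_le hx₀.1 with hx0 | hx0
        · -- x₀ = 0
          rw [← hx0]
          refine ⟨0, fun x hx => ?_⟩
          have e : bconv (0:ℝ) p = p := by rw [bconv]; ring
          rw [e]
          have h1 : p ≤ bconv x p := by rw [bconv]; nlinarith [hx.1, hp.2]
          have h2 : bconv x p ≤ 1/2 := by rw [bconv]; nlinarith [hx.2, hp.2]
          have h3 : (0:ℝ) ≤ p := hp.1
          have := hmono ⟨h3, hp.2⟩ ⟨le_trans h3 h1, h2⟩ h1
          linarith
        · obtain ⟨c, hc⟩ := mgl_pointwise_main (p := p) (x₀ := x₀) ⟨hp0, hp2⟩ ⟨hx0, hx2⟩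
          refine ⟨c, fun x hx => ?_⟩
          rw [bconv_eq, bconv_eq]
          exact hc x hx
lemma binEntInv_spec {v : ℝ} (h0 : 0 ≤ v) (h1 : v ≤ Real.log 2) :
    binEntInv v ∈ Set.Icc (0:ℝ) (1/2) ∧ binEnt (binEntInv v) = v := by
  have h12 : ((1:ℝ)/2) = 2⁻¹ := by norm_num
  obtain ⟨t, ht, htv⟩ : ∃ t ∈ Set.Icc (0:ℝ) (1/2), binEnt t = v := by
    have hc : ContinuousOn binEnt (Set.Icc (0:ℝ) (1/2)) := by
      rw [binEnt_eq]; exact Real.binEntropy_continuous.continuousOn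
    have hiv := intermediate_value_Icc (by norm_num : (0:ℝ) ≤ 1/2) hc
    have hv : v ∈ Set.Icc (binEnt 0) (binEnt (1/2)) := by
      rw [binEnt_eq]
      simp only [Real.binEntropy_zero, h12, Real.binEntropy_two_inv]
      exact ⟨h0, h1⟩
    exact hiv hv
  have hset : {x : ℝ | 0 ≤ x ∧ x ≤ 1/2 ∧ binEnt x ≤ v} = Set.Icc 0 t := by
    ext z
    simp only [Set.mem_setOf_eq, Set.mem_Icc]
    constructor
    · rintro ⟨hz0, hz2, hzv⟩
      refine ⟨hz0, ?_⟩
      by_contra hlt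
      push_neg at hlt
      have : binEnt t < binEnt z := by
        rw [binEnt_eq]
        exact Real.binEntropy_strictMonoOn ⟨ht.1, by rw [← h12]; exact ht.2⟩
          ⟨hz0, by rw [← h12]; exact hz2⟩ hlt
      rw [htv] at this
      linarith
    · rintro ⟨hz0, hzt⟩
      refine ⟨hz0, le_trans hzt ht.2, ?_⟩
      have : binEnt z ≤ binEnt t := by
        rw [binEnt_eq]
        exact Real.binEntropy_strictMonoOn.monotoneOn
          ⟨hz0, by rw [← h12]; exact le_trans hzt ht.2⟩
          ⟨ht.1, by rw [← h12]; exact ht.2⟩ hzt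
      rw [htv] at this
      exact this
  rw [binEntInv, hset, csSup_Icc ht.1]
  exact ⟨ht, htv⟩

lemma mgl_main_core {U : Type*} [Fintype U] {pt : ℝ} (hpt : pt ∈ Set.Icc (0:ℝ) (1/2))
    (W x : U → ℝ) (hW : ∀ u, 0 ≤ W u) (hsum : ∑ u, W u = 1)
    (hx : ∀ u, x u ∈ Set.Icc (0:ℝ) (1/2)) :
    binEnt (bconv (binEntInv (∑ u, W u * binEnt (x u))) pt)
      ≤ ∑ u, W u * binEnt (bconv (x u) pt) := by
  have hent : ∀ u, 0 ≤ binEnt (x u) ∧ binEnt (x u) ≤ Real.log 2 := by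
    intro u
    rw [binEnt_eq]
    exact ⟨Real.binEntropy_nonneg (hx u).1 (le_trans (hx u).2 (by norm_num)),
      Real.binEntropy_le_log_two⟩
  have hV0 : 0 ≤ ∑ u, W u * binEnt (x u) :=
    Finset.sum_nonneg fun u _ => mul_nonneg (hW u) (hent u).1
  have hV1 : (∑ u, W u * binEnt (x u)) ≤ Real.log 2 := by
    calc (∑ u, W u * binEnt (x u)) ≤ ∑ u, W u * Real.log 2 :=
          Finset.sum_le_sum fun u _ => mul_le_mul_of_nonneg_left (hent u).2 (hW u)
      _ = Real.log 2 := by rw [← Finset.sum_mul, hsum, one_mul]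
  obtain ⟨hx₀mem, hx₀v⟩ := binEntInv_spec hV0 hV1
  obtain ⟨c, hc⟩ := mgl_pointwise hpt hx₀mem
  set V : ℝ := ∑ u, W u * binEnt (x u) with hVdef
  set K : ℝ := binEnt (bconv (binEntInv V) pt) with hK
  calc K = (K - c*V) * (∑ u, W u) + c * ∑ u, W u * binEnt (x u) := by
        rw [hsum, ← hVdef]; ring
    _ = ∑ u, ((K - c*V) * W u + c * (W u * binEnt (x u))) := by
        rw [Finset.mul_sum, Finset.mul_sum, ← Finset.sum_add_distrib]
    _ ≤ ∑ u, W u * binEnt (bconv (x u) pt) := by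
        apply Finset.sum_le_sum
        intro u _
        have h1 := hc (x u) (hx u)
        rw [hx₀v] at h1
        calc (K - c*V) * W u + c * (W u * binEnt (x u))
            = W u * (K + c * (binEnt (x u) - V)) := by ring
          _ ≤ W u * binEnt (bconv (x u) pt) := mul_le_mul_of_nonneg_left (by linarith) (hW u)

lemma condEnt_term {a b : ℝ} (ha : 0 ≤ a) (hb : 0 ≤ b) :
    -(a * Real.log (a / (a+b)) + b * Real.log (b / (a+b)))
      = (a+b) * binEnt (b / (a+b)) := by
  rcases eq_or_lt_of_le (by positivity : (0:ℝ) ≤ a+b) with h | h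
  · have ha0 : a = 0 := by linarith
    have hb0 : b = 0 := by linarith
    simp [ha0, hb0, binEnt]
  · have hne : a+b ≠ 0 := ne_of_gt h
    rw [binEnt]
    have e1 : 1 - b/(a+b) = a/(a+b) := by field_simp; ring
    rw [e1]
    set LA := Real.log (a/(a+b))
    set LB := Real.log (b/(a+b))
    field_simp
    ring

lemma binEnt_min (r : ℝ) : binEnt (min r (1-r)) = binEnt r := by
  rcases le_total r (1-r) with h | h
  · rw [min_eq_left h]
  · rw [min_eq_right h, binEnt_eq, Real.binEntropy_one_sub]

lemma binEnt_bconv_min (r pt : ℝ) : binEnt (bconv (min r (1-r)) pt) = binEnt (bconv r pt) := by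
  rcases le_total r (1-r) with h | h
  · rw [min_eq_left h]
  · rw [min_eq_right h, show bconv (1-r) pt = 1 - bconv r pt by rw [bconv, bconv]; ring,
      binEnt_eq, Real.binEntropy_one_sub]


/-- conditional Mrs. Gerber's Lemma: if `(U, Y₁)` has joint
distribution `p` with `Y₁` binary, and `Y₂ = Y₁ ⊕ Ψ̃` with `Ψ̃ ~ Bern(p̃)`
independent of `(U, Y₁)`, `p̃ ∈ [0, 1/2]`, then
`H(Y₂|U) ≥ h_b( h_b⁻¹(H(Y₁|U)) ∗ p̃ )`. -/
theorem stmt11 {U : Type*} [Fintype U] [Nonempty U]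
    (pt : ℝ) (hpt : pt ∈ Set.Icc (0 : ℝ) (1 / 2))
    (p : U → Fin 2 → ℝ) (hpnn : ∀ u a, 0 ≤ p u a) (hpsum : ∑ u, ∑ a, p u a = 1)
    (q : U → Fin 2 → ℝ)
    (hq : ∀ u b, q u b = ∑ a, p u a * (if b = a then 1 - pt else pt)) :
    condEnt q ≥ binEnt (bconv (binEntInv (condEnt p)) pt) := by

  have hpt0 : (0:ℝ) ≤ pt := hpt.1
  have hpt1 : pt ≤ 1/2 := hpt.2
  set W : U → ℝ := fun u => p u 0 + p u 1 with hWdef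
  set r : U → ℝ := fun u => p u 1 / W u with hrdef
  set x : U → ℝ := fun u => min (r u) (1 - r u) with hxdef
  have hW0 : ∀ u, 0 ≤ W u := fun u => add_nonneg (hpnn u 0) (hpnn u 1)
  have hWsum : ∑ u, W u = 1 := by
    rw [← hpsum]
    exact Finset.sum_congr rfl fun u _ => by rw [Fin.sum_univ_two]
  have hq0 : ∀ u, q u 0 = p u 0 * (1-pt) + p u 1 * pt := by
    intro u; rw [hq]; rw [Fin.sum_univ_two]; norm_num
  have hq1 : ∀ u, q u 1 = p u 0 * pt + p u 1 * (1-pt) := by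
    intro u; rw [hq]; rw [Fin.sum_univ_two]; norm_num
  have hqsum : ∀ u, q u 0 + q u 1 = W u := by
    intro u; rw [hq0, hq1, hWdef]; ring
  have hqnn : ∀ u b, 0 ≤ q u b := by
    intro u b
    rw [hq]
    apply Finset.sum_nonneg
    intro a _
    apply mul_nonneg (hpnn u a)
    split <;> linarith
  -- case analysis data for zero-mass rows
  have hzero : ∀ u, W u = 0 → p u 0 = 0 ∧ p u 1 = 0 := by
    intro u h
    have h' : p u 0 + p u 1 = 0 := h
    constructor <;> linarith [hpnn u 0, hpnn u 1]
  have hx_mem : ∀ u, x u ∈ Set.Icc (0:ℝ) (1/2) := by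
    intro u
    by_cases hWu : W u = 0
    · have h0 := (hzero u hWu).2
      have : r u = 0 := by rw [hrdef]; simp [h0]
      rw [hxdef]
      simp only [this]
      norm_num
    · have hWpos : 0 < W u := lt_of_le_of_ne (hW0 u) (Ne.symm hWu)
      have hr0 : 0 ≤ r u := div_nonneg (hpnn u 1) (hW0 u)
      have hr1 : r u ≤ 1 := by
        rw [hrdef]
        rw [div_le_one hWpos]
        simp only [hWdef]
        linarith [hpnn u 0]
      constructor
      · exact le_min hr0 (by linarith)
      · rcases le_total (r u) (1 - r u) with h | h
        · rw [hxdef]; simp only [min_eq_left h]; linarith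
        · rw [hxdef]; simp only [min_eq_right h]; linarith
  have hp_dec : condEnt p = ∑ u, W u * binEnt (x u) := by
    rw [condEnt, ← Finset.sum_neg_distrib]
    apply Finset.sum_congr rfl
    intro u _
    simp only [Fin.sum_univ_two]
    rw [condEnt_term (hpnn u 0) (hpnn u 1)]
    rw [hxdef, binEnt_min]
  have hq_dec : condEnt q = ∑ u, W u * binEnt (bconv (x u) pt) := by
    rw [condEnt, ← Finset.sum_neg_distrib]
    apply Finset.sum_congr rfl
    intro u _
    simp only [Fin.sum_univ_two]
    rw [condEnt_term (hqnn u 0) (hqnn u 1)]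
    rw [hqsum u]
    by_cases hWu : W u = 0
    · rw [hWu]; ring
    · have hWpos : 0 < W u := lt_of_le_of_ne (hW0 u) (Ne.symm hWu)
      have e : q u 1 / W u = bconv (r u) pt := by
        rw [hq1, hrdef, bconv]
        simp only [hWdef]
        have hne : p u 0 + p u 1 ≠ 0 := ne_of_gt hWpos
        field_simp
        ring
      rw [e, hxdef, binEnt_bconv_min]
  rw [hp_dec, hq_dec, ge_iff_le]
  exact mgl_main_core hpt W x hW0 hWsum hx_mem
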